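/- arXiv:math/0109203 — 3 statements merged into one kernel-verified Lean document; each statement's English description precedes it below -/
import Mathlib

section
/- Let k be a commutative ring, H a bialgebra over k with comultiplication Δ (written Δ(b) = Σ b⁽¹⁾ ⊗ b⁽²⁾), and A a k-module carrying an H-module structure and a k-bilinear multiplication μ : A × A → A which is H-invariant: b·μ(x,y) = Σ μ(b⁽¹⁾·x, b⁽²⁾·y) for all b ∈ H, x, y ∈ A. Let F ∈ H ⊗ H be invertible with inverse F⁻¹ = Σ f̄ᵢ ⊗ ḡᵢ, and let Φ = Σ Φ¹ ⊗ Φ² ⊗ Φ³ ∈ H ⊗ H ⊗ H satisfy (F ⊗ 1)·(Δ ⊗ id)(F) = (1 ⊗ F)·(id ⊗ Δ)(F)·Φ. Assume μ is Φ-associative: Σ μ(Φ¹·x, μ(Φ²·y, Φ³·z)) = μ(μ(x,y), z) for all x, y, z ∈ A. Define m(x,y) = Σ μ(f̄ᵢ·x, ḡᵢ·y). Then m is an associative multiplication on A, and m is invariant under the twisted comultiplication Δ_F(b) = F·Δ(b)·F⁻¹: writing Δ_F(b) = Σ b₍₁₎ ⊗ b₍₂₎, one has b·m(x,y) = Σ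 m(b₍₁₎·x, b₍₂₎·y) for all b ∈ H, x, y ∈ A. -/
open scoped TensorProduct

namespace Stmt4

variable (k : Type) [CommRing k]
variable (H : Type) [Ring H] [Bialgebra k H]
variable (A : Type) [AddCommGroup A] [Module k A]

/-- The componentwise action of `H ⊗ H` on `A ⊗ A` induced by an `H`-module
structure `ρ : H → End(A)`: an element `G = Σ G¹ ⊗ G²` sends `x ⊗ y` to
`Σ G¹·x ⊗ G²·y`. -/
noncomputable def act2 (ρ : H →ₐ[k] Module.End k A) :
    H ⊗[k] H →ₗ[k] (A ⊗[k] A →ₗ[k] A ⊗[k] A) :=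
  TensorProduct.homTensorHomMap (RingHom.id k) A A A A ∘ₗ
    TensorProduct.map ρ.toLinearMap ρ.toLinearMap

/-- The componentwise action of `H ⊗ H ⊗ H` on `A ⊗ A ⊗ A`. -/
noncomputable def act3 (ρ : H →ₐ[k] Module.End k A) :
    H ⊗[k] (H ⊗[k] H) →ₗ[k] (A ⊗[k] (A ⊗[k] A) →ₗ[k] A ⊗[k] (A ⊗[k] A)) :=
  TensorProduct.homTensorHomMap (RingHom.id k) A (A ⊗[k] A) A (A ⊗[k] A) ∘ₗ
    TensorProduct.map ρ.toLinearMap (act2 k H A ρ)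

/-- `G ⊗ 1 : H⊗² → H⊗³`, `a ⊗ b ↦ a ⊗ b ⊗ 1`. -/
noncomputable def ext12 : H ⊗[k] H →ₗ[k] H ⊗[k] (H ⊗[k] H) :=
  TensorProduct.map LinearMap.id ((TensorProduct.mk k H H).flip 1)

/-- `1 ⊗ G : H⊗² → H⊗³`, `a ⊗ b ↦ 1 ⊗ a ⊗ b`. -/
noncomputable def ext23 : H ⊗[k] H →ₗ[k] H ⊗[k] (H ⊗[k] H) :=
  TensorProduct.mk k H (H ⊗[k] H) 1

/-- `Δ ⊗ id : H⊗² → H⊗³`. -/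
noncomputable def comul12 : H ⊗[k] H →ₗ[k] H ⊗[k] (H ⊗[k] H) :=
  (TensorProduct.assoc k H H H).toLinearMap ∘ₗ
    TensorProduct.map Coalgebra.comul LinearMap.id

/-- `id ⊗ Δ : H⊗² → H⊗³`. -/
noncomputable def comul23 : H ⊗[k] H →ₗ[k] H ⊗[k] (H ⊗[k] H) :=
  TensorProduct.map LinearMap.id Coalgebra.comul

variable (ρ : H →ₐ[k] Module.End k A)

lemma act2_tmul (a b : H) : act2 k H A ρ (a ⊗ₜ[k] b) = TensorProduct.map (ρ a) (ρ b) := by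
  simp [act2]

lemma act3_tmul (a : H) (G : H ⊗[k] H) :
    act3 k H A ρ (a ⊗ₜ[k] G) = TensorProduct.map (ρ a) (act2 k H A ρ G) := by
  simp [act3]

lemma act2_mul (u v : H ⊗[k] H) :
    act2 k H A ρ (u * v) = act2 k H A ρ u ∘ₗ act2 k H A ρ v := by
  induction u using TensorProduct.induction_on with
  | zero => simp
  | tmul a b =>
    induction v using TensorProduct.induction_on with
    | zero => simp
    | tmul c d =>
      rw [Algebra.TensorProduct.tmul_mul_tmul, act2_tmul, act2_tmul, act2_tmul,
        map_mul, map_mul, Module.End.mul_eq_comp, Module.End.mul_eq_comp,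
        TensorProduct.map_comp]
    | add x y hx hy => rw [mul_add, map_add, map_add, hx, hy, LinearMap.comp_add]
  | add x y hx hy => rw [add_mul, map_add, map_add, hx, hy, LinearMap.add_comp]

lemma act2_one : act2 k H A ρ 1 = LinearMap.id := by
  rw [Algebra.TensorProduct.one_def, act2_tmul, map_one]
  exact TensorProduct.map_id

lemma act3_mul (u v : H ⊗[k] (H ⊗[k] H)) :
    act3 k H A ρ (u * v) = act3 k H A ρ u ∘ₗ act3 k H A ρ v := by
  induction u using TensorProduct.induction_on with
  | zero => simp
  | tmul a b =>
    induction v using TensorProduct.induction_on with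
    | zero => simp
    | tmul c d =>
      rw [Algebra.TensorProduct.tmul_mul_tmul, act3_tmul, act3_tmul, act3_tmul,
        map_mul, act2_mul, Module.End.mul_eq_comp, TensorProduct.map_comp]
    | add x y hx hy => rw [mul_add, map_add, map_add, hx, hy, LinearMap.comp_add]
  | add x y hx hy => rw [add_mul, map_add, map_add, hx, hy, LinearMap.add_comp]


noncomputable def ext12A : H ⊗[k] H →ₐ[k] H ⊗[k] (H ⊗[k] H) :=
  Algebra.TensorProduct.map (AlgHom.id k H) Algebra.TensorProduct.includeLeft

lemma ext12_eq : ext12 k H = (ext12A k H).toLinearMap := by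
  apply TensorProduct.ext'
  intro a b
  rfl

noncomputable def ext23A : H ⊗[k] H →ₐ[k] H ⊗[k] (H ⊗[k] H) :=
  Algebra.TensorProduct.includeRight

lemma ext23_eq : ext23 k H = (ext23A k H).toLinearMap := rfl

noncomputable def comul12A : H ⊗[k] H →ₐ[k] H ⊗[k] (H ⊗[k] H) :=
  (Algebra.TensorProduct.assoc k k k H H H).toAlgHom.comp
    (Algebra.TensorProduct.map (Bialgebra.comulAlgHom k H) (AlgHom.id k H))

lemma comul12_eq : comul12 k H = (comul12A k H).toLinearMap := by
  apply TensorProduct.ext'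
  intro a b
  show (TensorProduct.assoc k H H H) ((Coalgebra.comul a) ⊗ₜ[k] b)
    = (Algebra.TensorProduct.assoc k k k H H H) ((Bialgebra.comulAlgHom k H a) ⊗ₜ[k] b)
  rw [Bialgebra.comulAlgHom_apply]
  induction (Coalgebra.comul (R := k) a) using TensorProduct.induction_on with
  | zero =>
      simp only [TensorProduct.zero_tmul, LinearEquiv.map_zero, map_zero]
  | tmul x y => rw [TensorProduct.assoc_tmul, Algebra.TensorProduct.assoc_tmul]
  | add u v hu hv =>
      rw [TensorProduct.add_tmul, LinearEquiv.map_add, map_add, hu, hv]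

noncomputable def comul23A : H ⊗[k] H →ₐ[k] H ⊗[k] (H ⊗[k] H) :=
  Algebra.TensorProduct.map (AlgHom.id k H) (Bialgebra.comulAlgHom k H)

lemma comul23_eq : comul23 k H = (comul23A k H).toLinearMap := by
  apply TensorProduct.ext'
  intro a b
  rfl


variable (μ : A →ₗ[k] A →ₗ[k] A)

lemma compatR
    (hinv : ∀ b : H, ρ b ∘ₗ TensorProduct.lift μ =
      TensorProduct.lift μ ∘ₗ act2 k H A ρ (Coalgebra.comul b))
    (G : H ⊗[k] H) :
    act2 k H A ρ G ∘ₗ TensorProduct.map LinearMap.id (TensorProduct.lift μ)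
      = TensorProduct.map LinearMap.id (TensorProduct.lift μ) ∘ₗ
          act3 k H A ρ (comul23 k H G) := by
  induction G using TensorProduct.induction_on with
  | zero => simp
  | tmul a b =>
    have h1 : comul23 k H (a ⊗ₜ[k] b) = a ⊗ₜ[k] (Coalgebra.comul b) := by
      simp [comul23]
    rw [h1, act3_tmul, act2_tmul]
    calc TensorProduct.map (ρ a) (ρ b) ∘ₗ
          TensorProduct.map LinearMap.id (TensorProduct.lift μ)
        = TensorProduct.map ((ρ a) ∘ₗ LinearMap.id)
            ((ρ b) ∘ₗ TensorProduct.lift μ) := by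
          rw [TensorProduct.map_comp]
      _ = TensorProduct.map (LinearMap.id ∘ₗ (ρ a))
            (TensorProduct.lift μ ∘ₗ act2 k H A ρ (Coalgebra.comul b)) := by
          rw [hinv b, LinearMap.comp_id, LinearMap.id_comp]
      _ = TensorProduct.map LinearMap.id (TensorProduct.lift μ) ∘ₗ
            TensorProduct.map (ρ a) (act2 k H A ρ (Coalgebra.comul b)) := by
          rw [TensorProduct.map_comp]
  | add u v hu hv =>
    simp only [map_add, LinearMap.add_comp, LinearMap.comp_add, hu, hv]

lemma act3_ext23 (G : H ⊗[k] H) :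
    act3 k H A ρ (ext23 k H G)
      = TensorProduct.map LinearMap.id (act2 k H A ρ G) := by
  have : ext23 k H G = (1 : H) ⊗ₜ[k] G := rfl
  rw [this, act3_tmul, map_one]
  rfl

lemma act3_assocH (c : H ⊗[k] H) (b : H) :
    act3 k H A ρ ((TensorProduct.assoc k H H H) (c ⊗ₜ[k] b)) ∘ₗ
        (TensorProduct.assoc k A A A).toLinearMap
      = (TensorProduct.assoc k A A A).toLinearMap ∘ₗ
          TensorProduct.map (act2 k H A ρ c) (ρ b) := by
  induction c using TensorProduct.induction_on with
  | zero =>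
    simp only [TensorProduct.zero_tmul, LinearEquiv.map_zero, LinearMap.map_zero,
      TensorProduct.map_zero_left, LinearMap.zero_comp, LinearMap.comp_zero]
  | tmul p q =>
    rw [TensorProduct.assoc_tmul, act3_tmul, act2_tmul, act2_tmul]
    exact TensorProduct.map_map_comp_assoc_eq (ρ p) (ρ q) (ρ b)
  | add u v hu hv =>
    simp only [TensorProduct.add_tmul, LinearEquiv.map_add, LinearMap.map_add,
      LinearMap.add_comp, LinearMap.comp_add, TensorProduct.map_add_left, hu, hv]


lemma symm_comp_assocA :
    ((TensorProduct.assoc k A A A).symm.toLinearMap) ∘ₗ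
      (TensorProduct.assoc k A A A).toLinearMap = LinearMap.id := by
  apply LinearMap.ext
  intro x
  simp

lemma act3_ext12 (G : H ⊗[k] H) :
    act3 k H A ρ (ext12 k H G) ∘ₗ (TensorProduct.assoc k A A A).toLinearMap
      = (TensorProduct.assoc k A A A).toLinearMap ∘ₗ
          TensorProduct.map (act2 k H A ρ G) LinearMap.id := by
  induction G using TensorProduct.induction_on with
  | zero =>
    simp only [LinearMap.map_zero, TensorProduct.map_zero_left, LinearMap.zero_comp,
      LinearMap.comp_zero]
  | tmul a b =>
    have h1 : ext12 k H (a ⊗ₜ[k] b) = a ⊗ₜ[k] (b ⊗ₜ[k] (1 : H)) := rfl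
    rw [h1, act3_tmul, act2_tmul, act2_tmul, map_one]
    have := TensorProduct.map_map_comp_assoc_eq (R := k) (ρ a) (ρ b) (LinearMap.id (M := A))
    convert this using 2
    rfl
  | add u v hu hv =>
    simp only [LinearMap.map_add, TensorProduct.map_add_left, LinearMap.add_comp,
      LinearMap.comp_add, hu, hv]

lemma compatL
    (hinv : ∀ b : H, ρ b ∘ₗ TensorProduct.lift μ =
      TensorProduct.lift μ ∘ₗ act2 k H A ρ (Coalgebra.comul b))
    (G : H ⊗[k] H) :
    act2 k H A ρ G ∘ₗ TensorProduct.map (TensorProduct.lift μ) LinearMap.id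
      = (TensorProduct.map (TensorProduct.lift μ) LinearMap.id ∘ₗ
          (TensorProduct.assoc k A A A).symm.toLinearMap) ∘ₗ
          (act3 k H A ρ (comul12 k H G) ∘ₗ (TensorProduct.assoc k A A A).toLinearMap) := by
  induction G using TensorProduct.induction_on with
  | zero =>
    simp only [LinearMap.map_zero, LinearMap.zero_comp, LinearMap.comp_zero]
  | tmul a b =>
    have hc : comul12 k H (a ⊗ₜ[k] b)
        = (TensorProduct.assoc k H H H) ((Coalgebra.comul a) ⊗ₜ[k] b) := by
      simp [comul12]
    rw [hc, act3_assocH, LinearMap.comp_assoc, ← LinearMap.comp_assoc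
      (TensorProduct.map (act2 k H A ρ (Coalgebra.comul a)) (ρ b))
      ((TensorProduct.assoc k A A A).toLinearMap)
      ((TensorProduct.assoc k A A A).symm.toLinearMap),
      symm_comp_assocA, LinearMap.id_comp, act2_tmul]
    calc TensorProduct.map (ρ a) (ρ b) ∘ₗ
          TensorProduct.map (TensorProduct.lift μ) LinearMap.id
        = TensorProduct.map ((ρ a) ∘ₗ TensorProduct.lift μ)
            ((ρ b) ∘ₗ LinearMap.id) := by rw [TensorProduct.map_comp]
      _ = TensorProduct.map
            (TensorProduct.lift μ ∘ₗ act2 k H A ρ (Coalgebra.comul a))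
            (LinearMap.id ∘ₗ (ρ b)) := by
          rw [hinv a, LinearMap.comp_id, LinearMap.id_comp]
      _ = TensorProduct.map (TensorProduct.lift μ) LinearMap.id ∘ₗ
            TensorProduct.map (act2 k H A ρ (Coalgebra.comul a)) (ρ b) := by
          rw [TensorProduct.map_comp]
  | add u v hu hv =>
    simp only [LinearMap.map_add, LinearMap.add_comp, LinearMap.comp_add, hu, hv]



/-- **Proposition 2.2**: twisting an `H`-invariant `Φ`-associative multiplication
`μ` by the inverse of a twist `F` (satisfying the twist equation
`(F ⊗ 1)·(Δ ⊗ id)(F) = (1 ⊗ F)·(id ⊗ Δ)(F)·Φ`) yields an associative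
multiplication `m(x,y) = Σ μ(f̄ᵢ·x, ḡᵢ·y)` which is invariant under the twisted
comultiplication `Δ_F(b) = F·Δ(b)·F⁻¹`. -/
theorem twist_of_Phi_associative
    (ρ : H →ₐ[k] Module.End k A) (μ : A →ₗ[k] A →ₗ[k] A)
    (hinv : ∀ b : H,
      ρ b ∘ₗ TensorProduct.lift μ =
        TensorProduct.lift μ ∘ₗ act2 k H A ρ (Coalgebra.comul b))
    (F Finv : H ⊗[k] H) (hF : F * Finv = 1) (hF' : Finv * F = 1)
    (Φ : H ⊗[k] (H ⊗[k] H))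
    (htwist : ext12 k H F * comul12 k H F = ext23 k H F * comul23 k H F * Φ)
    (hΦassoc : ∀ x y z : A,
      (TensorProduct.lift μ ∘ₗ TensorProduct.map LinearMap.id (TensorProduct.lift μ))
          (act3 k H A ρ Φ (x ⊗ₜ[k] (y ⊗ₜ[k] z))) = μ (μ x y) z) :
    (∀ x y z : A,
      (fun a b => TensorProduct.lift μ (act2 k H A ρ Finv (a ⊗ₜ[k] b)))
          ((fun a b => TensorProduct.lift μ (act2 k H A ρ Finv (a ⊗ₜ[k] b))) x y) z =
      (fun a b => TensorProduct.lift μ (act2 k H A ρ Finv (a ⊗ₜ[k] b))) x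
          ((fun a b => TensorProduct.lift μ (act2 k H A ρ Finv (a ⊗ₜ[k] b))) y z)) ∧
    (∀ b : H,
      ρ b ∘ₗ (TensorProduct.lift μ ∘ₗ act2 k H A ρ Finv) =
        (TensorProduct.lift μ ∘ₗ act2 k H A ρ Finv) ∘ₗ
          act2 k H A ρ (F * Coalgebra.comul b * Finv)) := by

  -- inverse identities for the four maps
  have e23' : ext23 k H Finv * ext23 k H F = 1 := by
    rw [ext23_eq]
    show (ext23A k H) Finv * (ext23A k H) F = 1
    rw [← map_mul, hF', map_one]
  have e12 : ext12 k H F * ext12 k H Finv = 1 := by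
    rw [ext12_eq]
    show (ext12A k H) F * (ext12A k H) Finv = 1
    rw [← map_mul, hF, map_one]
  have c23' : comul23 k H Finv * comul23 k H F = 1 := by
    rw [comul23_eq]
    show (comul23A k H) Finv * (comul23A k H) F = 1
    rw [← map_mul, hF', map_one]
  have c12 : comul12 k H F * comul12 k H Finv = 1 := by
    rw [comul12_eq]
    show (comul12A k H) F * (comul12A k H) Finv = 1
    rw [← map_mul, hF, map_one]
  -- the key identity
  have hkey : Φ * (comul12 k H Finv * ext12 k H Finv)
      = comul23 k H Finv * ext23 k H Finv := by
    have h1 : (comul23 k H Finv * ext23 k H Finv) *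
        (ext12 k H F * comul12 k H F) = Φ := by
      rw [htwist, ← mul_assoc,
        mul_assoc (comul23 k H Finv) (ext23 k H Finv) (ext23 k H F * comul23 k H F),
        ← mul_assoc (ext23 k H Finv) (ext23 k H F) (comul23 k H F),
        e23', one_mul, c23', one_mul]
    rw [← h1, mul_assoc, mul_assoc (ext12 k H F),
      ← mul_assoc (comul12 k H F), c12, one_mul, e12, mul_one]
  constructor
  · -- associativity
    intro x y z
    have hR : (TensorProduct.lift μ ∘ₗ act2 k H A ρ Finv) ∘ₗ
        TensorProduct.map LinearMap.id (TensorProduct.lift μ ∘ₗ act2 k H A ρ Finv)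
        = (TensorProduct.lift μ ∘ₗ TensorProduct.map LinearMap.id (TensorProduct.lift μ))
            ∘ₗ act3 k H A ρ (comul23 k H Finv * ext23 k H Finv) := by
      have hsplit : TensorProduct.map LinearMap.id
            (TensorProduct.lift μ ∘ₗ act2 k H A ρ Finv)
          = TensorProduct.map LinearMap.id (TensorProduct.lift μ) ∘ₗ
            TensorProduct.map (LinearMap.id : A →ₗ[k] A) (act2 k H A ρ Finv) := by
        rw [← TensorProduct.map_comp, LinearMap.id_comp]
      rw [hsplit, ← act3_ext23 k H A ρ Finv, act3_mul, LinearMap.comp_assoc,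
        ← LinearMap.comp_assoc (act3 k H A ρ (ext23 k H Finv))
          (TensorProduct.map LinearMap.id (TensorProduct.lift μ))
          (act2 k H A ρ Finv),
        compatR k H A ρ μ hinv Finv]
      simp only [LinearMap.comp_assoc]
    have hPhi : TensorProduct.lift μ ∘ₗ
          TensorProduct.map (TensorProduct.lift μ) LinearMap.id ∘ₗ
          (TensorProduct.assoc k A A A).symm.toLinearMap
        = (TensorProduct.lift μ ∘ₗ TensorProduct.map LinearMap.id (TensorProduct.lift μ))
            ∘ₗ act3 k H A ρ Φ := by
      apply TensorProduct.ext'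
      intro x w
      induction w using TensorProduct.induction_on with
      | zero => simp
      | tmul y z =>
        simp only [LinearMap.comp_apply, TensorProduct.assoc_symm_tmul,
          TensorProduct.map_tmul, TensorProduct.lift.tmul, LinearMap.id_apply]
        exact (hΦassoc x y z).symm
      | add u v hu hv =>
        simp only [TensorProduct.tmul_add, LinearMap.map_add, hu, hv]
    have hL : (TensorProduct.lift μ ∘ₗ act2 k H A ρ Finv) ∘ₗ
        TensorProduct.map (TensorProduct.lift μ ∘ₗ act2 k H A ρ Finv) LinearMap.id
        = ((TensorProduct.lift μ ∘ₗ TensorProduct.map LinearMap.id (TensorProduct.lift μ))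
            ∘ₗ act3 k H A ρ (comul23 k H Finv * ext23 k H Finv)) ∘ₗ
          (TensorProduct.assoc k A A A).toLinearMap := by
      have hsplit : TensorProduct.map
            (TensorProduct.lift μ ∘ₗ act2 k H A ρ Finv) LinearMap.id
          = TensorProduct.map (TensorProduct.lift μ) LinearMap.id ∘ₗ
            TensorProduct.map (act2 k H A ρ Finv) (LinearMap.id : A →ₗ[k] A) := by
        rw [← TensorProduct.map_comp, LinearMap.id_comp]
      rw [hsplit, ← hkey]
      calc (TensorProduct.lift μ ∘ₗ act2 k H A ρ Finv) ∘ₗ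
            TensorProduct.map (TensorProduct.lift μ) LinearMap.id ∘ₗ
            TensorProduct.map (act2 k H A ρ Finv) LinearMap.id
          = TensorProduct.lift μ ∘ₗ
              (act2 k H A ρ Finv ∘ₗ TensorProduct.map (TensorProduct.lift μ) LinearMap.id) ∘ₗ
              TensorProduct.map (act2 k H A ρ Finv) LinearMap.id := by
            simp only [LinearMap.comp_assoc]
        _ = TensorProduct.lift μ ∘ₗ
              ((TensorProduct.map (TensorProduct.lift μ) LinearMap.id ∘ₗ
                (TensorProduct.assoc k A A A).symm.toLinearMap) ∘ₗ
                (act3 k H A ρ (comul12 k H Finv) ∘ₗ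
                  (TensorProduct.assoc k A A A).toLinearMap)) ∘ₗ
              TensorProduct.map (act2 k H A ρ Finv) LinearMap.id := by
            rw [compatL k H A ρ μ hinv Finv]
        _ = (TensorProduct.lift μ ∘ₗ
              TensorProduct.map (TensorProduct.lift μ) LinearMap.id ∘ₗ
              (TensorProduct.assoc k A A A).symm.toLinearMap) ∘ₗ
              act3 k H A ρ (comul12 k H Finv) ∘ₗ
              ((TensorProduct.assoc k A A A).toLinearMap ∘ₗ
                TensorProduct.map (act2 k H A ρ Finv) LinearMap.id) := by
            simp only [LinearMap.comp_assoc]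
        _ = (TensorProduct.lift μ ∘ₗ
              TensorProduct.map (TensorProduct.lift μ) LinearMap.id ∘ₗ
              (TensorProduct.assoc k A A A).symm.toLinearMap) ∘ₗ
              act3 k H A ρ (comul12 k H Finv) ∘ₗ
              (act3 k H A ρ (ext12 k H Finv) ∘ₗ
                (TensorProduct.assoc k A A A).toLinearMap) := by
            rw [act3_ext12 k H A ρ Finv]
        _ = (((TensorProduct.lift μ ∘ₗ
              TensorProduct.map LinearMap.id (TensorProduct.lift μ)) ∘ₗ
              act3 k H A ρ Φ) ∘ₗ
              (act3 k H A ρ (comul12 k H Finv) ∘ₗ act3 k H A ρ (ext12 k H Finv))) ∘ₗ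
              (TensorProduct.assoc k A A A).toLinearMap := by
            rw [← hPhi]
            simp only [LinearMap.comp_assoc]
        _ = ((TensorProduct.lift μ ∘ₗ
              TensorProduct.map LinearMap.id (TensorProduct.lift μ)) ∘ₗ
              act3 k H A ρ (Φ * (comul12 k H Finv * ext12 k H Finv))) ∘ₗ
              (TensorProduct.assoc k A A A).toLinearMap := by
            rw [act3_mul, act3_mul]
            simp only [LinearMap.comp_assoc]
    have lhs_eq : TensorProduct.lift μ (act2 k H A ρ Finv
          ((TensorProduct.lift μ (act2 k H A ρ Finv (x ⊗ₜ[k] y))) ⊗ₜ[k] z))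
        = ((TensorProduct.lift μ ∘ₗ act2 k H A ρ Finv) ∘ₗ
            TensorProduct.map (TensorProduct.lift μ ∘ₗ act2 k H A ρ Finv) LinearMap.id)
            ((x ⊗ₜ[k] y) ⊗ₜ[k] z) := by
      simp only [LinearMap.comp_apply, TensorProduct.map_tmul, LinearMap.id_apply]
    have rhs_eq : TensorProduct.lift μ (act2 k H A ρ Finv
          (x ⊗ₜ[k] (TensorProduct.lift μ (act2 k H A ρ Finv (y ⊗ₜ[k] z)))))
        = ((TensorProduct.lift μ ∘ₗ act2 k H A ρ Finv) ∘ₗ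
            TensorProduct.map LinearMap.id (TensorProduct.lift μ ∘ₗ act2 k H A ρ Finv))
            (x ⊗ₜ[k] (y ⊗ₜ[k] z)) := by
      simp only [LinearMap.comp_apply, TensorProduct.map_tmul, LinearMap.id_apply]
    show TensorProduct.lift μ (act2 k H A ρ Finv
          ((TensorProduct.lift μ (act2 k H A ρ Finv (x ⊗ₜ[k] y))) ⊗ₜ[k] z))
        = TensorProduct.lift μ (act2 k H A ρ Finv
          (x ⊗ₜ[k] (TensorProduct.lift μ (act2 k H A ρ Finv (y ⊗ₜ[k] z)))))
    rw [lhs_eq, rhs_eq, hL, hR]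
    simp only [LinearMap.comp_apply, LinearEquiv.coe_coe, TensorProduct.assoc_tmul]
  · -- invariance under the twisted comultiplication
    intro b
    have h1 : Finv * (F * Coalgebra.comul b * Finv) = Coalgebra.comul b * Finv := by
      rw [← mul_assoc, ← mul_assoc, hF', one_mul]
    calc ρ b ∘ₗ (TensorProduct.lift μ ∘ₗ act2 k H A ρ Finv)
        = (ρ b ∘ₗ TensorProduct.lift μ) ∘ₗ act2 k H A ρ Finv := by
          rw [LinearMap.comp_assoc]
      _ = (TensorProduct.lift μ ∘ₗ act2 k H A ρ (Coalgebra.comul b)) ∘ₗ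
            act2 k H A ρ Finv := by rw [hinv b]
      _ = TensorProduct.lift μ ∘ₗ act2 k H A ρ (Coalgebra.comul b * Finv) := by
          rw [act2_mul, LinearMap.comp_assoc]
      _ = TensorProduct.lift μ ∘ₗ
            act2 k H A ρ (Finv * (F * Coalgebra.comul b * Finv)) := by rw [h1]
      _ = (TensorProduct.lift μ ∘ₗ act2 k H A ρ Finv) ∘ₗ
            act2 k H A ρ (F * Coalgebra.comul b * Finv) := by
          rw [act2_mul, LinearMap.comp_assoc]


end Stmt4
end

section
/- Let g be a Lie algebra over ℂ acting by derivations on a commutative associative unital ℂ-algebra A (so A is a module over the universal enveloping algebra U(g), and each x ∈ g acts as a derivation). Let φ = Σ φ¹ ⊗ φ² ⊗ φ³ ∈ U(g) ⊗ U(g) ⊗ U(g), and define Pφ(a,b,c) = Σ (φ¹·a)(φ²·b)(φ³·c) for a, b, c ∈ A. Let μ₁, μ₂ : A × A → A be ℂ-bilinear maps satisfying, for all a, b, c ∈ A: (i) the Hochschild 2-cocycle condition a·μ₁(b,c) − μ₁(ab,c) + μ₁(a,bc) − μ₁(a,b)·c = 0; and (ii) μ₂(a,bc) + μ₁(a,μ₁(b,c))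 + a·μ₂(b,c) + Pφ(a,b,c) = μ₂(ab,c) + μ₁(μ₁(a,b),c) + μ₂(a,b)·c. Define f(a,b) = μ₁(a,b) − μ₁(b,a). Then: (1) f is a biderivation: f(ab,c) = a·f(b,c) + f(a,c)·b for all a, b, c; (2) if moreover μ₁ is g-invariant, i.e. x·μ₁(a,b) = μ₁(x·a, b) + μ₁(a, x·b) for all x ∈ g, then f is g-invariant in the same sense; (3) f(f(a,b),c) + f(f(b,c),a) + f(f(c,a),b) = Σ_{σ ∈ S₃} sgn(σ) Pφ(a_{σ(1)}, a_{σ(2)}, a_{σ(3)}), where (a₁,a₂,a₃) = (a,b,c). -/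
open scoped TensorProduct

namespace Stmt5

variable (g : Type) [LieRing g] [LieAlgebra ℂ g]
variable (A : Type) [CommRing A] [Algebra ℂ A]

attribute [local instance 100] LieRing.ofAssociativeRing

/-- The universal enveloping algebra of `g`. -/
noncomputable abbrev U : Type := UniversalEnvelopingAlgebra ℂ g

/-- The canonical embedding `g → U(g)`, as a linear map. -/
noncomputable abbrev iota : g →ₗ[ℂ] U g :=
  (UniversalEnvelopingAlgebra.ι ℂ : g →ₗ⁅ℂ⁆ U g).toLinearMap

/-- Given a `U(g)`-module structure `ρ` on `A` and `φ = Σ φ¹ ⊗ φ² ⊗ φ³ ∈ U(g)⊗³`,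
this is `Pφ(a,b,c) = Σ (φ¹·a)(φ²·b)(φ³·c)`. -/
noncomputable def Pphi (ρ : U g →ₐ[ℂ] Module.End ℂ A)
    (φ : U g ⊗[ℂ] (U g ⊗[ℂ] U g)) (a b c : A) : A :=
  TensorProduct.lift
    ((LinearMap.mul ℂ A).compl₁₂ (ρ.toLinearMap.flip a)
      (TensorProduct.lift
        ((LinearMap.mul ℂ A).compl₁₂ (ρ.toLinearMap.flip b) (ρ.toLinearMap.flip c))))
    φ

/-- **Proposition 2.3** (algebraic form).  Let `g` act on a commutative algebra `A`
through a `U(g)`-module structure `ρ` in which every `x ∈ g` acts as a derivation.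
Let `φ ∈ U(g)⊗³` and let `μ₁, μ₂` be bilinear maps satisfying the coefficients of
`h` and `h²` of the `Φ_h`-associativity condition for `Φ_h = 1 + h²φ + o(h²)`:
(i) `a·μ₁(b,c) − μ₁(ab,c) + μ₁(a,bc) − μ₁(a,b)·c = 0`, and
(ii) `μ₂(a,bc) + μ₁(a,μ₁(b,c)) + a·μ₂(b,c) + Pφ(a,b,c)
     = μ₂(ab,c) + μ₁(μ₁(a,b),c) + μ₂(a,b)·c`.
Then `f(a,b) = μ₁(a,b) − μ₁(b,a)` is a biderivation, it is `g`-invariant whenever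
`μ₁` is, and it satisfies the Jacobi identity up to the alternated action of `φ`. -/
theorem antisymmetrization_is_phi_bracket
    (ρ : U g →ₐ[ℂ] Module.End ℂ A)
    (hder : ∀ (x : g) (a b : A),
      ρ (iota g x) (a * b) = ρ (iota g x) a * b + a * ρ (iota g x) b)
    (φ : U g ⊗[ℂ] (U g ⊗[ℂ] U g))
    (μ₁ μ₂ : A →ₗ[ℂ] A →ₗ[ℂ] A)
    (hcocycle : ∀ a b c : A,
      a * μ₁ b c - μ₁ (a * b) c + μ₁ a (b * c) - μ₁ a b * c = 0)
    (hsecond : ∀ a b c : A,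
      μ₂ a (b * c) + μ₁ a (μ₁ b c) + a * μ₂ b c + Pphi g A ρ φ a b c =
        μ₂ (a * b) c + μ₁ (μ₁ a b) c + μ₂ a b * c)
    (f : A → A → A) (hf : ∀ a b : A, f a b = μ₁ a b - μ₁ b a) :
    (∀ a b c : A, f (a * b) c = a * f b c + f a c * b) ∧
    ((∀ (x : g) (a b : A),
        ρ (iota g x) (μ₁ a b) = μ₁ (ρ (iota g x) a) b + μ₁ a (ρ (iota g x) b)) →
      ∀ (x : g) (a b : A),
        ρ (iota g x) (f a b) = f (ρ (iota g x) a) b + f a (ρ (iota g x) b)) ∧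
    (∀ a b c : A,
      f (f a b) c + f (f b c) a + f (f c a) b =
        ∑ σ : Equiv.Perm (Fin 3),
          (Equiv.Perm.sign σ : ℤ) •
            Pphi g A ρ φ (![a, b, c] (σ 0)) (![a, b, c] (σ 1)) (![a, b, c] (σ 2))) := by
  refine ⟨?_, ?_, ?_⟩
  · intro a b c
    have h1 := hcocycle a b c
    have h2 := hcocycle a c b
    have h3 := hcocycle c a b
    rw [mul_comm c b] at h2
    rw [mul_comm c a] at h3
    simp only [hf]
    linear_combination h2 - h1 - h3
  · intro hinv x a b
    simp only [hf, map_sub, hinv]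
    abel
  · intro a b c
    have huniv : (Finset.univ : Finset (Equiv.Perm (Fin 3))) =
        {1, Equiv.swap 0 1, Equiv.swap 0 2, Equiv.swap 1 2,
          Equiv.swap 0 1 * Equiv.swap 1 2, Equiv.swap 1 2 * Equiv.swap 0 1} := by decide
    rw [huniv, Finset.sum_insert (by decide), Finset.sum_insert (by decide),
      Finset.sum_insert (by decide), Finset.sum_insert (by decide),
      Finset.sum_pair (by decide)]
    simp only [show ((1 : Equiv.Perm (Fin 3)) 0) = 0 from rfl,
      show ((1 : Equiv.Perm (Fin 3)) 1) = 1 from rfl,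
      show ((1 : Equiv.Perm (Fin 3)) 2) = 2 from rfl,
      show ((Equiv.swap 0 1 : Equiv.Perm (Fin 3)) 0) = 1 from by decide,
      show ((Equiv.swap 0 1 : Equiv.Perm (Fin 3)) 1) = 0 from by decide,
      show ((Equiv.swap 0 1 : Equiv.Perm (Fin 3)) 2) = 2 from by decide,
      show ((Equiv.swap 0 2 : Equiv.Perm (Fin 3)) 0) = 2 from by decide,
      show ((Equiv.swap 0 2 : Equiv.Perm (Fin 3)) 1) = 1 from by decide,
      show ((Equiv.swap 0 2 : Equiv.Perm (Fin 3)) 2) = 0 from by decide,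
      show ((Equiv.swap 1 2 : Equiv.Perm (Fin 3)) 0) = 0 from by decide,
      show ((Equiv.swap 1 2 : Equiv.Perm (Fin 3)) 1) = 2 from by decide,
      show ((Equiv.swap 1 2 : Equiv.Perm (Fin 3)) 2) = 1 from by decide,
      show ((Equiv.swap 0 1 * Equiv.swap 1 2 : Equiv.Perm (Fin 3)) 0) = 1 from by decide,
      show ((Equiv.swap 0 1 * Equiv.swap 1 2 : Equiv.Perm (Fin 3)) 1) = 2 from by decide,
      show ((Equiv.swap 0 1 * Equiv.swap 1 2 : Equiv.Perm (Fin 3)) 2) = 0 from by decide,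
      show ((Equiv.swap 1 2 * Equiv.swap 0 1 : Equiv.Perm (Fin 3)) 0) = 2 from by decide,
      show ((Equiv.swap 1 2 * Equiv.swap 0 1 : Equiv.Perm (Fin 3)) 1) = 0 from by decide,
      show ((Equiv.swap 1 2 * Equiv.swap 0 1 : Equiv.Perm (Fin 3)) 2) = 1 from by decide,
      show ((Equiv.Perm.sign (1 : Equiv.Perm (Fin 3)) : ℤ)) = 1 from by decide,
      show ((Equiv.Perm.sign (Equiv.swap 0 1 : Equiv.Perm (Fin 3)) : ℤ)) = -1 from by decide,
      show ((Equiv.Perm.sign (Equiv.swap 0 2 : Equiv.Perm (Fin 3)) : ℤ)) = -1 from by decide,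
      show ((Equiv.Perm.sign (Equiv.swap 1 2 : Equiv.Perm (Fin 3)) : ℤ)) = -1 from by decide,
      show ((Equiv.Perm.sign (Equiv.swap 0 1 * Equiv.swap 1 2 : Equiv.Perm (Fin 3)) : ℤ)) = 1
        from by decide,
      show ((Equiv.Perm.sign (Equiv.swap 1 2 * Equiv.swap 0 1 : Equiv.Perm (Fin 3)) : ℤ)) = 1
        from by decide,
      Matrix.cons_val_zero, Matrix.cons_val_one, Matrix.head_cons,
      show (![a, b, c] 2) = c from rfl,
      one_smul, neg_smul, neg_one_zsmul]
    have h1 := hsecond a b c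
    have h2 := hsecond b a c
    have h3 := hsecond c b a
    have h4 := hsecond a c b
    have h5 := hsecond b c a
    have h6 := hsecond c a b
    rw [mul_comm b a] at h2
    rw [mul_comm c b, mul_comm b a] at h3
    rw [mul_comm c b] at h4
    rw [mul_comm c a] at h5
    rw [mul_comm c a] at h6
    simp only [hf, map_sub, LinearMap.sub_apply]
    linear_combination h2 + h3 + h4 - h1 - h5 - h6

end Stmt5
end

section
/- Let A be a commutative associative unital ℂ-algebra. For each pair (k,l) of natural numbers let m_{k,l} : A × A → A be a ℂ-bilinear map, with m_{0,0}(a,b) = ab the given product, and suppose the two-parameter formal deformation m_{t,h} = Σ_{k,l} t^k h^l m_{k,l} is associative coefficientwise: for every (p,q) and all a, b, c ∈ A, Σ_{(k₁,l₁)+(k₂,l₂)=(p,q)} [ m_{k₁,l₁}(m_{k₂,l₂}(a,b), c) − m_{k₁,l₁}(a, m_{k₂,l₂}(b,c)) ] = 0. Define v(a,b) = m_{1,0}(a,b) − m_{1,0}(b,a) and p(a,b) = m_{0,1}(a,b) − m_{0,1}(b,a). Then v and p are biderivations (f(ab,c) = a f(b,c) + f(a,c) b), each satisfies the Jacobi identity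 (f(f(a,b),c) + f(f(b,c),a) + f(f(c,a),b) = 0), and they are compatible: v(p(a,b),c) + p(v(a,b),c) + v(p(b,c),a) + p(v(b,c),a) + v(p(c,a),b) + p(v(c,a),b) = 0 for all a, b, c ∈ A. -/
namespace Stmt6

/-- The brackets along `t` and along `h` of a two-parameter associative formal
deformation `m_{t,h} = Σ_{k,l} tᵏ hˡ m_{k,l}` of a commutative algebra `A` are
compatible Poisson brackets: each of
`v(a,b) = m₁₀(a,b) − m₁₀(b,a)` and `p(a,b) = m₀₁(a,b) − m₀₁(b,a)` is a
biderivation satisfying the Jacobi identity, and their Schouten bracket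
vanishes (the displayed mixed-Jacobi compatibility). -/
theorem two_parameter_quantization_brackets_compatible
    (A : Type) [CommRing A] [Algebra ℂ A]
    (m : ℕ → ℕ → A →ₗ[ℂ] A →ₗ[ℂ] A)
    (hm00 : ∀ a b : A, m 0 0 a b = a * b)
    (hassoc : ∀ (p q : ℕ) (a b c : A),
      ∑ u ∈ Finset.HasAntidiagonal.antidiagonal p, ∑ w ∈ Finset.HasAntidiagonal.antidiagonal q,
        (m u.1 w.1 (m u.2 w.2 a b) c - m u.1 w.1 a (m u.2 w.2 b c)) = 0)
    (v p : A → A → A)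
    (hv : ∀ a b : A, v a b = m 1 0 a b - m 1 0 b a)
    (hp : ∀ a b : A, p a b = m 0 1 a b - m 0 1 b a) :
    (∀ a b c : A, v (a * b) c = a * v b c + v a c * b) ∧
    (∀ a b c : A, p (a * b) c = a * p b c + p a c * b) ∧
    (∀ a b c : A, v (v a b) c + v (v b c) a + v (v c a) b = 0) ∧
    (∀ a b c : A, p (p a b) c + p (p b c) a + p (p c a) b = 0) ∧
    (∀ a b c : A,
      v (p a b) c + p (v a b) c + v (p b c) a + p (v b c) a +
        v (p c a) b + p (v c a) b = 0) := by
  -- first-order cocycle conditions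
  have C1 : ∀ a b c : A,
      m 1 0 (a*b) c - m 1 0 a (b*c) + (m 1 0 a b * c - a * m 1 0 b c) = 0 := by
    intro a b c
    have h := hassoc 1 0 a b c
    simp [Finset.Nat.sum_antidiagonal_eq_sum_range_succ_mk, Finset.sum_range_succ,
      hm00] at h
    linear_combination h
  have C2 : ∀ a b c : A,
      m 0 1 (a*b) c - m 0 1 a (b*c) + (m 0 1 a b * c - a * m 0 1 b c) = 0 := by
    intro a b c
    have h := hassoc 0 1 a b c
    simp [Finset.Nat.sum_antidiagonal_eq_sum_range_succ_mk, Finset.sum_range_succ,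
      hm00] at h
    linear_combination h
  -- second-order conditions
  have D1 : ∀ a b c : A,
      m 1 0 (m 1 0 a b) c - m 1 0 a (m 1 0 b c)
        + (m 2 0 (a*b) c - m 2 0 a (b*c)) + (m 2 0 a b * c - a * m 2 0 b c) = 0 := by
    intro a b c
    have h := hassoc 2 0 a b c
    simp [Finset.Nat.sum_antidiagonal_eq_sum_range_succ_mk, Finset.sum_range_succ,
      hm00] at h
    linear_combination h
  have D2 : ∀ a b c : A,
      m 0 1 (m 0 1 a b) c - m 0 1 a (m 0 1 b c)
        + (m 0 2 (a*b) c - m 0 2 a (b*c)) + (m 0 2 a b * c - a * m 0 2 b c) = 0 := by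
    intro a b c
    have h := hassoc 0 2 a b c
    simp [Finset.Nat.sum_antidiagonal_eq_sum_range_succ_mk, Finset.sum_range_succ,
      hm00] at h
    linear_combination h
  have D12 : ∀ a b c : A,
      m 1 0 (m 0 1 a b) c - m 1 0 a (m 0 1 b c)
        + (m 0 1 (m 1 0 a b) c - m 0 1 a (m 1 0 b c))
        + (m 1 1 (a*b) c - m 1 1 a (b*c)) + (m 1 1 a b * c - a * m 1 1 b c) = 0 := by
    intro a b c
    have h := hassoc 1 1 a b c
    simp [Finset.Nat.sum_antidiagonal_eq_sum_range_succ_mk, Finset.sum_range_succ,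
      hm00] at h
    linear_combination h
  refine ⟨?_, ?_, ?_, ?_, ?_⟩
  · intro a b c
    simp only [hv]
    linear_combination (norm := ring_nf) C1 a b c + C1 c a b - C1 a c b
  · intro a b c
    simp only [hp]
    linear_combination (norm := ring_nf) C2 a b c + C2 c a b - C2 a c b
  · intro a b c
    simp only [hv, map_sub, LinearMap.sub_apply]
    linear_combination (norm := ring_nf)
      D1 a b c - D1 b a c - D1 a c b - D1 c b a + D1 b c a + D1 c a b
  · intro a b c
    simp only [hp, map_sub, LinearMap.sub_apply]
    linear_combination (norm := ring_nf)
      D2 a b c - D2 b a c - D2 a c b - D2 c b a + D2 b c a + D2 c a b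
  · intro a b c
    simp only [hv, hp, map_sub, LinearMap.sub_apply]
    linear_combination (norm := ring_nf)
      D12 a b c - D12 b a c - D12 a c b - D12 c b a + D12 b c a + D12 c a b


end Stmt6
end
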